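/- Suppose sequences of functions A_n(z), B_n(z) satisfy the supplementary conditions B_n(z)+B_{n+1}(z)=zA_n(z)−v'(z) (S1) and 1+z(B_{n+1}(z)−B_n(z))=β_{n+1}A_{n+1}(z)−β_nA_{n−1}(z) (S2), with B_0=0 and A_{−1}=0. Then the summed condition (S2') holds: Σ_{j=0}^{n−1}A_j(z) + B_n(z)² + v'(z)B_n(z) = β_n A_n(z) A_{n−1}(z). -/

import Mathlib

/-- From the supplementary conditions (S1) and (S2), the summed condition (S2')
holds: `∑_{j<n} A_j(z) + B_n(z)^2 + v'(z) B_n(z) = β_n A_n(z) A_{n-1}(z)`. -/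
theorem supplementary_condition_S2' (v' : ℝ → ℝ) (β : ℕ → ℝ)
    (A B : ℕ → ℝ → ℝ)
    (hβ0 : β 0 = 0)
    (hB0 : ∀ z, B 0 z = 0)
    (hS1 : ∀ n z, B n z + B (n + 1) z = z * A n z - v' z)
    (hS2 : ∀ n z, 1 ≤ n →
      1 + z * (B (n + 1) z - B n z) = β (n + 1) * A (n + 1) z - β n * A (n - 1) z)
    (hS2zero : ∀ z, 1 + z * (B 1 z - B 0 z) = β 1 * A 1 z)
    (n : ℕ) (hn : 1 ≤ n) (z : ℝ) :
    ∑ j ∈ Finset.range n, A j z + (B n z) ^ 2 + v' z * B n z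
      = β n * A n z * A (n - 1) z := by
  induction n, hn using Nat.le_induction with
  | base =>
      have h1 := hS1 0 z
      have h2 := hS2zero z
      rw [hB0 z] at h1 h2
      simp only [Finset.sum_range_one]
      norm_num
      linear_combination A 0 z * h2 + B 1 z * h1
  | succ n hn ih =>
      have h1 := hS1 n z
      have h2 := hS2 n z hn
      rw [Finset.sum_range_succ]
      have hn1 : n + 1 - 1 = n := rfl
      rw [hn1]
      linear_combination ih + A n z * h2 + (B (n + 1) z - B n z) * h1
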